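/- For every a ∈ ℝ, the 3×3 real matrix with rows (16a⁴ − 4a² + 1, 8a³, 0), (8a³, 4a² + 1, 0), (0, 0, 1) has eigenvalues exactly 1, 8a⁴ + 1 + 4a²·√(4a⁴ + 1), and 8a⁴ + 1 − 4a²·√(4a⁴ + 1); equivalently, its characteristic polynomial is (t − 1)·(t − (8a⁴ + 1 + 4a²√(4a⁴+1)))·(t − (8a⁴ + 1 − 4a²√(4a⁴+1))). -/

import Mathlib

open Polynomial

noncomputable section

/-- The spectrum of the Jacobian matrix of `T⁶` at `(0,0,a)` is
`{1, 8a⁴+1+4a²√(4a⁴+1), 8a⁴+1-4a²√(4a⁴+1)}`; equivalently, its characteristic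
polynomial factors accordingly. -/
theorem jacobian_eigenvalues (a : ℝ) :
    let M : Matrix (Fin 3) (Fin 3) ℝ :=
      !![16 * a ^ 4 - 4 * a ^ 2 + 1, 8 * a ^ 3, 0;
         8 * a ^ 3, 4 * a ^ 2 + 1, 0;
         0, 0, 1]
    let μp : ℝ := 8 * a ^ 4 + 1 + 4 * a ^ 2 * Real.sqrt (4 * a ^ 4 + 1)
    let μm : ℝ := 8 * a ^ 4 + 1 - 4 * a ^ 2 * Real.sqrt (4 * a ^ 4 + 1)
    spectrum ℝ M = {1, μp, μm} ∧
    M.charpoly = (X - C 1) * (X - C μp) * (X - C μm) := by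
  intro M μp μm
  have hs : Real.sqrt (4 * a ^ 4 + 1) ^ 2 = 4 * a ^ 4 + 1 :=
    Real.sq_sqrt (by positivity)
  have hsum : μp + μm = 16 * a ^ 4 + 2 := by simp only [μp, μm]; ring
  have hprod : μp * μm = 1 := by
    simp only [μp, μm]
    nlinarith [hs]
  have hchar : M.charpoly = (X - C 1) * (X - C μp) * (X - C μm) := by
    rw [Matrix.charpoly, Matrix.det_fin_three]
    apply Polynomial.funext
    intro x
    simp [Matrix.charmatrix_apply, M, Matrix.diagonal, μp, μm]
    linear_combination (16 * a ^ 4 * (x - 1)) * hs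
  refine ⟨?_, hchar⟩
  -- spectrum
  have key : ∀ μ : ℝ, μ ∈ spectrum ℝ M ↔ M.charpoly.eval μ = 0 := by
    intro μ
    rw [spectrum.mem_iff, Matrix.isUnit_iff_isUnit_det, isUnit_iff_ne_zero, not_not]
    have : (algebraMap ℝ (Matrix (Fin 3) (Fin 3) ℝ) μ - M).det = M.charpoly.eval μ := by
      rw [Matrix.charpoly, eval_det, Matrix.matPolyEquiv_charmatrix]
      simp [Matrix.scalar, Algebra.algebraMap_eq_smul_one]
    rw [this]
  ext μ
  rw [key μ, hchar]
  simp only [eval_mul, eval_sub, eval_X, eval_C]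
  rw [mul_eq_zero, mul_eq_zero, sub_eq_zero, sub_eq_zero, sub_eq_zero]
  simp [Set.mem_insert_iff, or_assoc]
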